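/- Let 1 ≤ k ≤ n − 1 and let A > 0 and 0 < m ≤ M be real numbers. Then there exists a constant C > 0, depending only on n, k, A, m, M, such that for every λ = (λ_1, …, λ_n) ∈ Γ_k with λ_1 ≥ … ≥ λ_n, m ≤ σ_k(λ) ≤ M, and σ_{k+1}(λ) > −A, one has λ_n > −C. -/

import Mathlib

open Polynomial Multiset

lemma esymm_cons (a : ℝ) (S : Multiset ℝ) (j : ℕ) :
    (a ::ₘ S).esymm (j+1) = S.esymm (j+1) + a * S.esymm j := by
  simp only [Multiset.esymm, powersetCard_cons, Multiset.map_add, Multiset.sum_add,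
    Multiset.map_map]
  congr 1
  have : Multiset.map ((fun x : Multiset ℝ => x.prod) ∘ Multiset.cons a) (powersetCard j S)
      = Multiset.map (fun x : Multiset ℝ => a * x.prod) (powersetCard j S) := by
    apply Multiset.map_congr rfl
    intro T hT
    simp [Multiset.prod_cons]
  rw [this, ← Multiset.sum_map_mul_left]

lemma esymm_zero' (S : Multiset ℝ) : S.esymm 0 = 1 := by
  simp [Multiset.esymm, powersetCard_zero_left]

lemma esymm_eq_zero_of_card_lt {S : Multiset ℝ} {j : ℕ} (h : Multiset.card S < j) :
    S.esymm j = 0 := by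
  simp [Multiset.esymm, Multiset.powersetCard_eq_empty _ h]

lemma ms_cs (w : Multiset ℝ) : w.sum ^ 2 ≤ (Multiset.card w : ℝ) * (w.map (fun a => a^2)).sum := by
  induction w using Multiset.induction with
  | empty => simp
  | cons a w ih =>
    simp only [Multiset.sum_cons, Multiset.card_cons, Multiset.map_cons]
    push_cast
    set S := w.sum
    set Q := (w.map (fun a => a^2)).sum
    set D := (Multiset.card w : ℝ)
    have hQ : 0 ≤ Q := Multiset.sum_nonneg (by intro x hx; obtain ⟨y, _, rfl⟩ := Multiset.mem_map.1 hx; positivity)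
    have hD : 0 ≤ D := by positivity
    have h2 : (2*a*S)^2 ≤ (D*a^2+Q)^2 := by nlinarith [ih, sq_nonneg a, sq_nonneg (D*a^2 - Q)]
    have key : 2*a*S ≤ D*a^2 + Q := (abs_le_of_sq_le_sq' h2 (by positivity)).2
    nlinarith [ih]

lemma prod_one_sub_coeff (w : Multiset ℝ) :
    ((w.map fun b => (1 : ℝ[X]) - C b * X).prod.coeff 0 = 1) ∧
    ((w.map fun b => (1 : ℝ[X]) - C b * X).prod.coeff 1 = -w.sum) ∧
    (2 * (w.map fun b => (1 : ℝ[X]) - C b * X).prod.coeff 2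
      = w.sum ^ 2 - (w.map (fun a => a^2)).sum) := by
  induction w using Multiset.induction with
  | empty => refine ⟨by simp, ?_, ?_⟩ <;> simp [coeff_one]
  | cons a w ih =>
    obtain ⟨h0, h1, h2⟩ := ih
    simp only [Multiset.map_cons, Multiset.prod_cons, Multiset.sum_cons, Multiset.card_cons]
    set P := (w.map fun b => (1 : ℝ[X]) - C b * X).prod with hP
    have e : ((1 : ℝ[X]) - C a * X) * P = P - C a * (X * P) := by ring
    have hx0 : (X * P).coeff 0 = 0 := by rw [mul_coeff_zero]; simp
    have hx1 : (X * P).coeff 1 = P.coeff 0 := coeff_X_mul P 0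
    have hx2 : (X * P).coeff 2 = P.coeff 1 := coeff_X_mul P 1
    refine ⟨?_, ?_, ?_⟩
    · rw [e]; rw [coeff_sub, coeff_C_mul, hx0, h0]; ring
    · rw [e]; rw [coeff_sub, coeff_C_mul, hx1, h0, h1]; ring
    · rw [e]; rw [coeff_sub, coeff_C_mul, hx2, h1]
      nlinarith [h2]

-- derivative of a split real polynomial splits
lemma splits_derivative {p : ℝ[X]} (hp : p.Splits) :
    (derivative p).Splits := by
  by_cases hz : derivative p = 0
  · rw [hz]; exact Splits.zero
  have hp0 : p ≠ 0 := by rintro rfl; simp at hz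
  have hd1 : 1 ≤ p.natDegree := by
    by_contra h
    push_neg at h
    interval_cases hn : p.natDegree
    · exact hz (derivative_of_natDegree_zero hn)
  have hroots : Multiset.card p.roots = p.natDegree := (splits_iff_card_roots).1 hp
  have h1 : Multiset.card p.roots ≤ Multiset.card (derivative p).roots + 1 :=
    p.card_roots_le_derivative
  have h2 : Multiset.card (derivative p).roots ≤ (derivative p).natDegree :=
    (derivative p).card_roots' 
  have h3 : (derivative p).natDegree ≤ p.natDegree - 1 := p.natDegree_derivative_le
  rw [splits_iff_card_roots]
  omega

lemma splits_iterate_derivative (j : ℕ) {p : ℝ[X]} (hp : p.Splits) :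
    (derivative^[j] p).Splits := by
  induction j with
  | zero => exact hp
  | succ j ih => rw [Function.iterate_succ_apply']; exact splits_derivative ih

-- the core quadratic (top-of-Newton) inequality for split polynomials
lemma core_quadratic {g : ℝ[X]} (hg : g ≠ 0) (hs : g.Splits)
    (hd : 1 ≤ g.natDegree) :
    2 * (g.natDegree : ℝ) * (g.coeff 0 * g.coeff 2) ≤
      ((g.natDegree : ℝ) - 1) * (g.coeff 1)^2 := by
  set D := g.natDegree with hD
  have hcard : Multiset.card g.roots = D := (splits_iff_card_roots).1 hs
  by_cases h0 : (0:ℝ) ∈ g.roots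
  · have : g.coeff 0 = 0 := by
      rw [coeff_zero_eq_eval_zero]
      exact (Polynomial.mem_roots hg).1 h0
    rw [this]
    have : (1:ℝ) ≤ (D:ℝ) := by exact_mod_cast hd
    nlinarith [sq_nonneg (g.coeff 1)]
  · -- all roots nonzero
    have hne : ∀ a ∈ g.roots, a ≠ 0 := fun a ha h => h0 (h ▸ ha)
    have hfact : g = C g.leadingCoeff * (g.roots.map fun a => X - C a).prod :=
      (C_leadingCoeff_mul_prod_multiset_X_sub_C (splits_iff_card_roots.1 hs)).symm
    have hre : (g.roots.map fun a => X - C a)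
        = g.roots.map fun a => C (-a) * ((1:ℝ[X]) - C a⁻¹ * X) := by
      apply Multiset.map_congr rfl
      intro a ha
      have ha0 : a ≠ 0 := hne a ha
      rw [show C (-a) * ((1:ℝ[X]) - C a⁻¹ * X) = C (-a) - C ((-a) * a⁻¹) * X by
        rw [C_mul]; ring]
      rw [neg_mul, mul_inv_cancel₀ ha0]
      simp only [map_neg, map_one]
      ring
    set w : Multiset ℝ := g.roots.map (fun a => a⁻¹) with hw
    have hsplit : (g.roots.map fun a => C (-a) * ((1:ℝ[X]) - C a⁻¹ * X)).prod
        = C ((g.roots.map fun a => -a).prod) * (w.map fun b => (1:ℝ[X]) - C b * X).prod := by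
      rw [Multiset.prod_map_mul]
      congr 1
      · rw [map_multiset_prod, Multiset.map_map]
        rfl
      · rw [hw, Multiset.map_map]
        rfl
    set K := g.leadingCoeff * (g.roots.map fun a => -a).prod with hK
    have hgK : g = C K * (w.map fun b => (1:ℝ[X]) - C b * X).prod := by
      rw [hK, map_mul, mul_assoc, ← hsplit, ← hre, ← hfact]
    obtain ⟨c0, c1, c2⟩ := prod_one_sub_coeff w
    have hcw : (Multiset.card w : ℝ) = (D:ℝ) := by rw [hw]; simp [hcard]
    have hcs := ms_cs w
    rw [hcw] at hcs
    have g0 : g.coeff 0 = K := by rw [hgK, coeff_C_mul, c0, mul_one]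
    have g1 : g.coeff 1 = K * (-w.sum) := by rw [hgK, coeff_C_mul, c1]
    have g2 : 2 * g.coeff 2 = K * (w.sum^2 - (w.map (fun a => a^2)).sum) := by
      rw [hgK, coeff_C_mul, ← c2]; ring
    have e1 : 2 * (g.coeff 0 * g.coeff 2) = K^2 * (w.sum ^ 2 - (Multiset.map (fun a => a ^ 2) w).sum) := by
      rw [g0]; linear_combination K * g2
    have e2 : g.coeff 1 ^ 2 = K^2 * w.sum ^ 2 := by rw [g1]; ring
    nlinarith [mul_le_mul_of_nonneg_left hcs (sq_nonneg K), e1, e2]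

lemma newton_ineq (S : Multiset ℝ) (i : ℕ) (h : i + 2 ≤ Multiset.card S) :
    ((i:ℝ)+2) * ((Multiset.card S : ℝ) - i) * (S.esymm i * S.esymm (i+2)) ≤
    ((i:ℝ)+1) * ((Multiset.card S : ℝ) - i - 1) * (S.esymm (i+1))^2 := by
  set N := Multiset.card S with hN
  set d := N - (i + 2) with hd
  have hNd : N = d + i + 2 := by omega
  set f := (S.map fun a => X - C a).prod with hf
  have hfsplits : f.Splits := by
    rw [splits_iff_card_roots, roots_multiset_prod_X_sub_C,
      natDegree_multiset_prod_X_sub_C_eq_card]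
  have hfdeg : f.natDegree = N := natDegree_multiset_prod_X_sub_C_eq_card S
  have hfmonic : f.Monic := monic_multiset_prod_of_monic _ _ fun a _ => monic_X_sub_C a
  set g := derivative^[d] f with hg
  have hgsplits : g.Splits := splits_iterate_derivative d hfsplits
  have hgtop : g.coeff (i+2) = (N.descFactorial d : ℝ) * f.coeff N := by
    rw [hg, Polynomial.coeff_iterate_derivative, nsmul_eq_mul,
      show i + 2 + d = N from by omega]
  have hftop : f.coeff N = 1 := by
    rw [← hfdeg]; exact hfmonic.coeff_natDegree
  have hgtopne : g.coeff (i+2) ≠ 0 := by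
    rw [hgtop, hftop, mul_one]
    have : N.descFactorial d ≠ 0 := by
      rw [Ne, Nat.descFactorial_eq_zero_iff_lt]; omega
    exact_mod_cast this
  have hgne : g ≠ 0 := fun hz => hgtopne (by simp [hz])
  have hgdeg : g.natDegree = i + 2 := by
    refine le_antisymm ?_ (le_natDegree_of_ne_zero hgtopne)
    calc g.natDegree ≤ f.natDegree - d := natDegree_iterate_derivative f d
    _ = i + 2 := by omega
  -- coefficient identities
  have hcoeff : ∀ mm, mm ≤ 2 → g.coeff mm
      = ((mm+d).descFactorial d : ℝ) * ((-1)^(i+2-mm) * S.esymm (i+2-mm)) := by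
    intro mm hmm
    rw [hg, Polynomial.coeff_iterate_derivative, nsmul_eq_mul, hf,
      Multiset.prod_X_sub_C_coeff S (by omega : mm + d ≤ Multiset.card S)]
    congr 3 <;> omega
  set s : ℝ := (-1)^i with hs
  have hs2 : s^2 = 1 := by
    rw [hs, ← pow_mul, mul_comm, pow_mul]
    norm_num
  set e0 := S.esymm i
  set e1 := S.esymm (i+1)
  set e2 := S.esymm (i+2)
  set F : ℝ := (d.factorial : ℝ) with hF
  have hFpos : 0 < F := by rw [hF]; exact_mod_cast d.factorial_pos
  have A0 : g.coeff 0 = F * (s * e2) := by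
    rw [hcoeff 0 (by omega)]
    simp only [Nat.add_zero, Nat.sub_zero, Nat.zero_add]
    rw [Nat.descFactorial_self]
    rw [show (-1:ℝ)^(i+2) = s by rw [hs, pow_add]; norm_num]
    try ring
  have A1 : g.coeff 1 = (((1+d).descFactorial d : ℕ) : ℝ) * (-s * e1) := by
    rw [hcoeff 1 (by omega)]
    rw [show i + 2 - 1 = i + 1 by omega]
    rw [show (-1:ℝ)^(i+1) = -s by rw [hs, pow_add]; norm_num]
    try ring
  have A2 : g.coeff 2 = (((2+d).descFactorial d : ℕ) : ℝ) * (s * e0) := by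
    rw [hcoeff 2 (by omega)]
    rw [show i + 2 - 2 = i by omega]
  -- descFactorial facts
  have F1n : (1+d).descFactorial d = (d+1).factorial := by
    have h1 : (d+1).descFactorial (d+1) = (d+1).factorial := Nat.descFactorial_self _
    have h2 : (d+1).descFactorial (d+1) = (d+1-d) * (d+1).descFactorial d :=
      Nat.descFactorial_succ _ _
    rw [show d+1-d = 1 from by omega, one_mul] at h2
    rw [show 1 + d = d + 1 from by omega]; omega
  have F2n : 2 * ((2+d).descFactorial d) = (d+2).factorial := by
    have h1 : (d+2).descFactorial (d+2) = (d+2).factorial := Nat.descFactorial_self _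
    have h2 : (d+2).descFactorial (d+2) = (d+2-(d+1)) * (d+2).descFactorial (d+1) :=
      Nat.descFactorial_succ _ _
    have h3 : (d+2).descFactorial (d+1) = (d+2-d) * (d+2).descFactorial d :=
      Nat.descFactorial_succ _ _
    rw [show d+2-(d+1) = 1 from by omega, one_mul] at h2
    rw [show d+2-d = 2 from by omega] at h3
    rw [show 2 + d = d + 2 from by omega]; omega
  have H1 : (((1+d).descFactorial d : ℕ) : ℝ) = ((d:ℝ)+1) * F := by
    rw [F1n, hF]
    rw [Nat.factorial_succ]
    push_cast; ring
  have HG : 2 * (((2+d).descFactorial d : ℕ) : ℝ) = ((d:ℝ)+2) * (((d:ℝ)+1) * F) := by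
    have := congrArg (fun x : ℕ => (x : ℝ)) F2n
    push_cast at this
    rw [this, hF]
    rw [show d + 2 = (d+1) + 1 by omega, Nat.factorial_succ, Nat.factorial_succ]
    push_cast; ring
  set G : ℝ := (((2+d).descFactorial d : ℕ) : ℝ) with hGdef
  set H1v : ℝ := (((1+d).descFactorial d : ℕ) : ℝ) with hH1def
  have core := core_quadratic hgne hgsplits (by omega)
  rw [hgdeg] at core
  push_cast at core
  have EL : 2*((i:ℝ)+2)*(g.coeff 0 * g.coeff 2)
      = (((d:ℝ)+1)*F^2) * (((i:ℝ)+2)*((d:ℝ)+2)*(e0*e2)) := by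
    rw [A0, A2]
    linear_combination (2*((i:ℝ)+2)*F*G*e0*e2) * hs2 + (((i:ℝ)+2)*F*e0*e2) * HG
  have ER : (((i:ℝ)+2)-1)*(g.coeff 1)^2
      = (((d:ℝ)+1)*F^2) * (((i:ℝ)+1)*((d:ℝ)+1)*e1^2) := by
    rw [A1]
    linear_combination (((i:ℝ)+1)*H1v^2*e1^2) * hs2
      + (((i:ℝ)+1)*e1^2*(H1v + ((d:ℝ)+1)*F)) * H1
  rw [EL, ER] at core
  have hdiv := le_of_mul_le_mul_left core (by positivity : (0:ℝ) < ((d:ℝ)+1)*F^2)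
  have hc1 : (N : ℝ) - i = (d:ℝ) + 2 := by rw [hNd]; push_cast; ring
  have hc2 : (N : ℝ) - i - 1 = (d:ℝ) + 1 := by rw [hNd]; push_cast; ring
  rw [hc2, hc1]
  exact hdiv

lemma cone_drop {a : ℝ} (ha : a ≤ 0) {S : Multiset ℝ} {k : ℕ}
    (h : ∀ j, 1 ≤ j → j ≤ k → 0 < (a ::ₘ S).esymm j) :
    ∀ j, j ≤ k → 0 < S.esymm j := by
  intro j
  induction j with
  | zero => intro _; rw [esymm_zero']; norm_num
  | succ j ih =>
    intro hj
    have hS : 0 < S.esymm j := ih (by omega)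
    have hcons := h (j+1) (by omega) hj
    rw [esymm_cons] at hcons
    nlinarith [mul_nonpos_of_nonpos_of_nonneg ha hS.le]

lemma maclaurin_min (S : Multiset ℝ) (k' : ℕ) (hk : k' + 1 ≤ Multiset.card S)
    (hpos : ∀ j, j ≤ k' + 1 → 0 < S.esymm j) :
    ((Multiset.card S).choose k' : ℝ) *
      min 1 (S.esymm (k'+1) / ((Multiset.card S).choose (k'+1) : ℝ)) ≤ S.esymm k' := by
  set Nc := Multiset.card S with hNc
  set p : ℕ → ℝ := fun j => S.esymm j / (Nc.choose j : ℝ) with hp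
  have cpos : ∀ j, j ≤ Nc → (0:ℝ) < (Nc.choose j : ℝ) := by
    intro j hj; exact_mod_cast Nat.choose_pos hj
  have ppos : ∀ j, j ≤ k' + 1 → 0 < p j := by
    intro j hj
    exact div_pos (hpos j hj) (cpos j (by omega))
  have pnew : ∀ i, i + 2 ≤ k' + 1 → p i * p (i+2) ≤ p (i+1)^2 := by
    intro i hi
    have hiN : i + 2 ≤ Nc := by omega
    have NW := newton_ineq S i hiN
    set e0 := S.esymm i
    set e1 := S.esymm (i+1)
    set e2 := S.esymm (i+2)
    set c0 : ℝ := (Nc.choose i : ℝ) with hc0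
    set c1 : ℝ := (Nc.choose (i+1) : ℝ) with hc1
    set c2 : ℝ := (Nc.choose (i+2) : ℝ) with hc2
    have hc0p : 0 < c0 := cpos i (by omega)
    have hc1p : 0 < c1 := cpos (i+1) (by omega)
    have hc2p : 0 < c2 := cpos (i+2) (by omega)
    have idA : c1 * ((i:ℝ)+1) = c0 * ((Nc:ℝ) - i) := by
      have hh := Nat.choose_succ_right_eq Nc i
      have hcast : ((Nc.choose (i+1) * (i+1) : ℕ) : ℝ) = ((Nc.choose i * (Nc - i) : ℕ) : ℝ) := by
        exact_mod_cast congrArg (fun x : ℕ => (x:ℝ)) hh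
      push_cast [Nat.cast_sub (show i ≤ Nc by omega)] at hcast
      linear_combination hcast
    have idB : c2 * ((i:ℝ)+2) = c1 * ((Nc:ℝ) - i - 1) := by
      have hh := Nat.choose_succ_right_eq Nc (i+1)
      have hcast : ((Nc.choose (i+2) * (i+2) : ℕ) : ℝ) = ((Nc.choose (i+1) * (Nc - (i+1)) : ℕ) : ℝ) := by
        exact_mod_cast congrArg (fun x : ℕ => (x:ℝ)) hh
      push_cast [Nat.cast_sub (show i + 1 ≤ Nc by omega)] at hcast
      linear_combination hcast
    rw [hp]
    simp only []
    rw [div_mul_div_comm, div_pow, div_le_div_iff₀ (by positivity) (by positivity)]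
    -- goal : e0 * e2 * c1^2 ≤ e1^2 * (c0 * c2)
    have step1 : ((i:ℝ)+2)*((Nc:ℝ)-i)*(e0*e2) * (c0*c1) ≤
        ((i:ℝ)+1)*((Nc:ℝ)-i-1)*e1^2 * (c0*c1) :=
      mul_le_mul_of_nonneg_right NW (by positivity)
    have eqA : ((i:ℝ)+2)*((Nc:ℝ)-i)*(e0*e2) * (c0*c1)
        = ((i:ℝ)+1)*((i:ℝ)+2)*(e0*e2)*(c1*c1) := by
      linear_combination (-((i:ℝ)+2)*(e0*e2)*c1) * idA
    have eqB : ((i:ℝ)+1)*((Nc:ℝ)-i-1)*e1^2 * (c0*c1)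
        = ((i:ℝ)+1)*((i:ℝ)+2)*e1^2*(c0*c2) := by
      linear_combination (-((i:ℝ)+1)*e1^2*c0) * idB
    rw [eqA, eqB] at step1
    have hcoef : (0:ℝ) < ((i:ℝ)+1)*((i:ℝ)+2) := by positivity
    nlinarith [step1]
  -- the chain  p j ^ (j+1) ≥ p (j+1) ^ j
  have T : ∀ j, j ≤ k' → p (j+1) ^ j ≤ p j ^ (j+1) := by
    intro j
    induction j with
    | zero => intro _; simp [hp, esymm_zero']
    | succ j ih =>
      intro hj
      have tih := ih (by omega)
      have nw := pnew j (by omega)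
      have h0 : 0 < p j := ppos j (by omega)
      have h1 : 0 < p (j+1) := ppos (j+1) (by omega)
      have h2 : 0 < p (j+2) := ppos (j+2) (by omega)
      -- p(j+2)^(j+1) * p j ^ (j+1) ≤ (p(j+1)^2)^(j+1) = p(j+1)^(j+2) * p(j+1)^j
      have s1 : (p (j+2) * p j) ^ (j+1) ≤ (p (j+1)^2) ^ (j+1) := by
        apply pow_le_pow_left₀ (by positivity)
        nlinarith [nw]
      have s2 : p (j+2) ^ (j+1) * p j ^ (j+1) ≤ p (j+1) ^ (j+2) * p (j+1) ^ j := by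
        calc p (j+2) ^ (j+1) * p j ^ (j+1) = (p (j+2) * p j) ^ (j+1) := by rw [mul_pow]
        _ ≤ (p (j+1)^2) ^ (j+1) := s1
        _ = p (j+1) ^ (j+2) * p (j+1) ^ j := by rw [← pow_mul, ← pow_add]; ring_nf
      have s3 : p (j+1) ^ (j+2) * p (j+1) ^ j ≤ p (j+1) ^ (j+2) * p j ^ (j+1) := by
        apply mul_le_mul_of_nonneg_left tih (by positivity)
      have s4 : p (j+2) ^ (j+1) * p j ^ (j+1) ≤ p (j+1) ^ (j+2) * p j ^ (j+1) :=
        le_trans s2 s3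
      exact le_of_mul_le_mul_right s4 (by positivity)
  -- conclude : p k' ≥ min 1 (p (k'+1))
  have hfin : min 1 (p (k'+1)) ≤ p k' := by
    have tk := T k' (le_refl _)
    have h0 : 0 < p k' := ppos k' (by omega)
    have h1 : 0 < p (k'+1) := ppos (k'+1) (by omega)
    by_cases hle : p (k'+1) ≤ 1
    · have : p (k'+1) ^ (k'+1) ≤ p (k'+1) ^ k' :=
        pow_le_pow_of_le_one h1.le hle (by omega)
      have : p (k'+1) ^ (k'+1) ≤ p k' ^ (k'+1) := le_trans this tk
      have hpp : p (k'+1) ≤ p k' := by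
        exact le_of_pow_le_pow_left₀ (by omega) h0.le this
      exact le_trans (min_le_right _ _) hpp
    · push_neg at hle
      have h1' : (1:ℝ) ≤ p (k'+1) ^ k' := by
        simpa using pow_le_pow_left₀ zero_le_one hle.le k'
      have : (1:ℝ) ≤ p k' ^ (k'+1) := le_trans h1' tk
      have hpp : (1:ℝ) ≤ p k' := by
        by_contra hcon
        push_neg at hcon
        have := pow_lt_one₀ h0.le hcon (show k'+1 ≠ 0 by omega)
        linarith
      exact le_trans (min_le_left _ _) hpp
  -- unfold p
  have hck : (0:ℝ) < (Nc.choose k' : ℝ) := cpos k' (by omega)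
  rw [hp] at hfin
  simp only [] at hfin
  calc ((Nc.choose k' : ℕ) : ℝ) * min 1 (S.esymm (k'+1) / (Nc.choose (k'+1) : ℝ))
      ≤ ((Nc.choose k' : ℕ) : ℝ) * (S.esymm k' / (Nc.choose k' : ℝ)) := by
        apply mul_le_mul_of_nonneg_left hfin hck.le
    _ = S.esymm k' := by field_simp

noncomputable def esymm (n m : ℕ) (lam : Fin n → ℝ) : ℝ :=
  ∑ s ∈ (Finset.univ : Finset (Fin n)).powersetCard m, ∏ i ∈ s, lam i

def GardingCone (n k : ℕ) : Set (Fin n → ℝ) :=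
  {lam | ∀ j, 1 ≤ j → j ≤ k → 0 < esymm n j lam}

set_option maxHeartbeats 1000000 in
/-- For `1 ≤ k ≤ n-1`, `A > 0`, `0 < m ≤ M`, there is `C > 0`
(depending only on `n, k, A, m, M`) such that every decreasing `λ ∈ Γ_k` with
`m ≤ σ_k(λ) ≤ M` and `σ_{k+1}(λ) > -A` satisfies `λ_n > -C`. -/
theorem stmt1 (n k : ℕ) (hk1 : 1 ≤ k) (hkn : k + 1 ≤ n)
    (A m M : ℝ) (hA : 0 < A) (hm : 0 < m) (hmM : m ≤ M) :
    ∃ C : ℝ, 0 < C ∧ ∀ lam : Fin n → ℝ,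
      lam ∈ GardingCone n k →
      (∀ i j : Fin n, i ≤ j → lam j ≤ lam i) →
      m ≤ esymm n k lam → esymm n k lam ≤ M →
      -A < esymm n (k + 1) lam →
      -C < lam ⟨n - 1, by omega⟩ := by
  obtain ⟨k', rfl⟩ : ∃ k', k = k' + 1 := ⟨k - 1, by omega⟩
  obtain ⟨N', hN'⟩ : ∃ x : ℕ, x = n - 1 := ⟨n - 1, rfl⟩
  have hN'k : k' + 1 ≤ N' := by omega
  set Pc : ℝ := ((k':ℝ)+1) * ((N':ℝ) - k' - 1) with hPc
  set Qc : ℝ := ((k':ℝ)+2) * ((N':ℝ) - k') with hQc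
  have hNge : ((k':ℝ) + 1) ≤ (N':ℝ) := by exact_mod_cast hN'k
  have hPc0 : 0 ≤ Pc := by rw [hPc]; nlinarith
  have hQP : 0 < Qc - Pc := by rw [hPc, hQc]; nlinarith
  have hQcpos : 0 < Qc := by rw [hQc]; nlinarith
  have hM : 0 < M := lt_of_lt_of_le hm hmM
  have hch1 : (0:ℝ) < (N'.choose k' : ℝ) := by
    exact_mod_cast Nat.choose_pos (show k' ≤ N' by omega)
  have hch2 : (0:ℝ) < (N'.choose (k'+1) : ℝ) := by
    exact_mod_cast Nat.choose_pos (show k' + 1 ≤ N' by omega)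
  set a₀ : ℝ := (N'.choose k' : ℝ) * min 1 (m / (N'.choose (k'+1) : ℝ)) with ha₀
  have ha₀pos : 0 < a₀ := by
    apply mul_pos hch1
    apply lt_min one_pos (div_pos hm hch2)
  set C₂ : ℝ := (Qc*A/m + Pc*M/a₀)/(Qc-Pc) with hC₂
  refine ⟨max (A/m) C₂ + 1, ?_, ?_⟩
  · have : 0 < A/m := div_pos hA hm
    have := le_max_left (A/m) C₂
    linarith
  intro lam hGamma _hdec hm1 hm2 hA1
  set i₀ : Fin n := ⟨n-1, by omega⟩ with hi₀
  suffices main : -(max (A/m) C₂ + 1) < lam i₀ by exact main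
  set S : Multiset ℝ := Finset.univ.val.map lam with hS
  have hes : ∀ j, esymm n j lam = S.esymm j := by
    intro j
    exact (Finset.esymm_map_val lam Finset.univ j).symm
  have hmemv : i₀ ∈ Finset.univ.val := Finset.mem_val.mpr (Finset.mem_univ i₀)
  set S' : Multiset ℝ := (Finset.univ.val.erase i₀).map lam with hS'
  have hSdec : S = lam i₀ ::ₘ S' := by
    rw [hS, hS', ← Multiset.map_cons, Multiset.cons_erase hmemv]
  have hcardS' : Multiset.card S' = N' := by
    rw [hS', Multiset.card_map, Multiset.card_erase_of_mem hmemv]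
    simp [hN']
  have hG : ∀ j, 1 ≤ j → j ≤ k' + 1 → 0 < S.esymm j := by
    intro j h1 h2
    rw [← hes]
    exact hGamma j h1 h2
  have hCpos : (0:ℝ) < max (A/m) C₂ + 1 := by
    have : 0 < A/m := div_pos hA hm
    have := le_max_left (A/m) C₂
    linarith
  by_cases hsign : 0 ≤ lam i₀
  · linarith
  push_neg at hsign
  set t : ℝ := -lam i₀ with htdef
  have ht : 0 < t := by rw [htdef]; linarith
  have hlam : lam i₀ = -t := by rw [htdef]; ring
  have hG' : ∀ j, 1 ≤ j → j ≤ k' + 1 → 0 < (lam i₀ ::ₘ S').esymm j := by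
    intro j h1 h2; rw [← hSdec]; exact hG j h1 h2
  have hdrop : ∀ j, j ≤ k' + 1 → 0 < S'.esymm j := cone_drop hsign.le hG'
  set a : ℝ := S'.esymm k' with haa
  set b : ℝ := S'.esymm (k'+1) with hbb
  set c : ℝ := S'.esymm (k'+2) with hcc
  have hapos : 0 < a := hdrop k' (by omega)
  have hbpos : 0 < b := hdrop (k'+1) le_rfl
  have hid1 : S.esymm (k'+1) = b - t * a := by
    rw [hSdec, esymm_cons, hlam]; ring
  have hid2 : S.esymm (k'+2) = c - t * b := by
    rw [hSdec]
    rw [show k' + 2 = (k'+1) + 1 from rfl, esymm_cons, hlam]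
    ring
  have hm1' : m ≤ b - t * a := by rw [← hid1, ← hes]; exact hm1
  have hm2' : b - t * a ≤ M := by rw [← hid1, ← hes]; exact hm2
  have hA1' : -A < c - t * b := by
    rw [← hid2, ← hes]
    exact hA1
  have hbm : m ≤ b := by nlinarith
  have htb : t * b < A + c := by linarith
  rw [hlam]
  suffices hlt : t < max (A/m) C₂ + 1 by linarith
  by_cases hc : c ≤ 0
  · have h0 : t * m < A := by nlinarith
    have h1 : t < A/m := by rw [lt_div_iff₀ hm]; linarith [h0]
    have := le_max_left (A/m) C₂
    linarith
  push_neg at hc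
  have hk2N : k' + 2 ≤ N' := by
    by_contra hcon
    have h1 : Multiset.card S' < k' + 2 := by omega
    have h2 := esymm_eq_zero_of_card_lt h1
    rw [← hcc] at h2
    linarith
  clear_value t a b c i₀
  have NW := newton_ineq S' k' (by rw [hcardS']; omega)
  rw [hcardS', ← haa, ← hbb, ← hcc] at NW
  have NW' : Qc * (a*c) ≤ Pc * b^2 := by
    rw [hQc, hPc]
    calc ((k':ℝ)+2) * ((N':ℝ) - (k':ℝ)) * (a*c)
        ≤ ((k':ℝ)+1)*((N':ℝ)-(k':ℝ)-1) * b^2 := NW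
    _ = ((k':ℝ)+1) * ((N':ℝ) - k' - 1) * b^2 := by ring
  have MC := maclaurin_min S' k' (by rw [hcardS']; omega) hdrop
  rw [hcardS', ← haa, ← hbb] at MC
  have ha0a : a₀ ≤ a := by
    refine le_trans ?_ MC
    rw [ha₀]
    apply mul_le_mul_of_nonneg_left _ hch1.le
    exact min_le_min le_rfl ((div_le_div_iff_of_pos_right hch2).2 hbm)
  clear NW MC hdrop hG hG' hes hid1 hid2 hSdec hGamma hm1 hm2 hA1 hA1'
    hmemv hcardS' hsign hlam htdef haa hbb hcc hS hS' hi₀ _hdec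
  clear_value S S'
  clear S S' lam
  clear_value Pc Qc a₀ C₂
  -- final arithmetic
  have s1 : t*b*(Qc*a) < (A + c)*(Qc*a) :=
    mul_lt_mul_of_pos_right htb (mul_pos hQcpos hapos)
  have s4 : Pc*b^2 ≤ Pc*(b*(M+t*a)) := by
    have h1 : b*b ≤ b*(M+t*a) := by nlinarith
    have h2 := mul_le_mul_of_nonneg_left h1 hPc0
    nlinarith [h2]
  have step1 : t*(a*b*(Qc-Pc)) < Qc*a*A + Pc*b*M := by nlinarith [s1, NW', s4]
  have step2a : Qc*a*A ≤ Qc*A/m*(a*b) := by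
    rw [div_mul_eq_mul_div, le_div_iff₀ hm]
    nlinarith [mul_le_mul_of_nonneg_left hbm
      (mul_nonneg (mul_nonneg hQcpos.le hA.le) hapos.le)]
  have step2b : Pc*b*M ≤ Pc*M/a₀*(a*b) := by
    rw [div_mul_eq_mul_div, le_div_iff₀ ha₀pos]
    nlinarith [mul_le_mul_of_nonneg_left ha0a
      (mul_nonneg (mul_nonneg hPc0 hM.le) hbpos.le)]
  have hfin : t*(a*b*(Qc-Pc)) < C₂*(a*b*(Qc-Pc)) := by
    have hC₂eq : C₂*(a*b*(Qc-Pc)) = (Qc*A/m + Pc*M/a₀)*(a*b) := by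
      have h0 : Qc - Pc ≠ 0 := ne_of_gt hQP
      rw [hC₂]; field_simp
    rw [hC₂eq]
    have expand : (Qc*A/m + Pc*M/a₀)*(a*b) = Qc*A/m*(a*b) + Pc*M/a₀*(a*b) := by ring
    rw [expand]
    linarith [step1, step2a, step2b]
  have htC₂ : t < C₂ := lt_of_mul_lt_mul_right hfin
    (mul_nonneg (mul_nonneg hapos.le hbpos.le) hQP.le)
  have := le_max_right (A/m) C₂
  linarith
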